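/- Let S₁, S₂, S₃ be spheres in Euclidean 3-space with radii r₁, r₂, r₃ > 0 whose centres c₁, c₂, c₃ all lie on a line m, and let ℓ be a line tangent to each of the three spheres such that ℓ ∩ m = ∅ and the direction of ℓ differs from the direction of m (ℓ and m are skew). Then the set of lines that meet ℓ and are tangent to all three spheres is infinite. -/

import Mathlib

noncomputable section

/-- Euclidean 3-space. -/
abbrev E3 : Type := EuclideanSpace ℝ (Fin 3)

/-- A line in `ℝ³`: a 1-dimensional affine subspace. -/
def IsLine (L : AffineSubspace ℝ E3) : Prop := Module.finrank ℝ L.direction = 1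

/-- A plane in `ℝ³`: a 2-dimensional affine subspace. -/
def IsPlane (P : AffineSubspace ℝ E3) : Prop := Module.finrank ℝ P.direction = 2

/-- A line is tangent to the sphere with centre `c` and radius `r` if the distance
from `c` to the line equals `r`. -/
def Tangent (c : E3) (r : ℝ) (L : AffineSubspace ℝ E3) : Prop :=
  Metric.infDist c (L : Set E3) = r

/-- A line `L` meets a line `ℓ` if they have a common point. -/
def Meets (L ℓ : AffineSubspace ℝ E3) : Prop :=
  ((L : Set E3) ∩ (ℓ : Set E3)).Nonempty

open Metric EuclideanGeometry Module

lemma line_exists_dir {ℓ : AffineSubspace ℝ E3} (h : Module.finrank ℝ ℓ.direction = 1) :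
    ∃ v : E3, v ≠ 0 ∧ ℓ.direction = Submodule.span ℝ {v} := by
  have hne : ℓ.direction ≠ ⊥ := by
    intro hbot; rw [hbot] at h; simp at h
  obtain ⟨v, hv, hv0⟩ := Submodule.exists_mem_ne_zero_of_ne_bot hne
  refine ⟨v, hv0, ?_⟩
  have hle : Submodule.span ℝ {v} ≤ ℓ.direction := by
    rwa [Submodule.span_singleton_le_iff_mem]
  exact (Submodule.eq_of_le_of_finrank_eq hle (by rw [h, finrank_span_singleton hv0])).symm

lemma mem_line_iff {ℓ : AffineSubspace ℝ E3} {v x : E3}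
    (hdir : ℓ.direction = Submodule.span ℝ {v}) (hx : x ∈ ℓ) (z : E3) :
    z ∈ ℓ ↔ ∃ t : ℝ, z = t • v +ᵥ x := by
  rw [← AffineSubspace.vsub_right_mem_direction_iff_mem hx z, hdir,
    Submodule.mem_span_singleton]
  constructor
  · rintro ⟨t, ht⟩; exact ⟨t, by rw [ht, vsub_vadd]⟩
  · rintro ⟨t, rfl⟩; exact ⟨t, by simp⟩

lemma line_nonempty {ℓ : AffineSubspace ℝ E3} (h : Module.finrank ℝ ℓ.direction = 1) :
    ∃ b, b ∈ ℓ := by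
  have : ℓ ≠ ⊥ := by
    intro hbot; rw [hbot, AffineSubspace.direction_bot] at h; simp at h
  obtain ⟨b, hb⟩ := (AffineSubspace.nonempty_iff_ne_bot ℓ).2 this
  exact ⟨b, hb⟩

/-- Reflection in the affine subspace through `a` with direction `W`. -/
def refl3 (a : E3) (W : Submodule ℝ E3) : E3 ≃ᵃⁱ[ℝ] E3 :=
  haveI : Nonempty (AffineSubspace.mk' a W) := ⟨a, AffineSubspace.self_mem_mk' a W⟩
  EuclideanGeometry.reflection (AffineSubspace.mk' a W)

lemma refl3_fix_iff (a : E3) (W : Submodule ℝ E3) (p : E3) :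
    refl3 a W p = p ↔ p ∈ AffineSubspace.mk' a W := by
  haveI : Nonempty (AffineSubspace.mk' a W) := ⟨a, AffineSubspace.self_mem_mk' a W⟩
  exact reflection_eq_self_iff p

lemma refl3_infDist (a : E3) (W : Submodule ℝ E3) {c : E3}
    (hc : c ∈ AffineSubspace.mk' a W) (s : Set E3) :
    Metric.infDist c (refl3 a W '' s) = Metric.infDist c s := by
  nth_rewrite 1 [← (refl3_fix_iff a W c).2 hc]
  exact Metric.infDist_image (refl3 a W).isometry

lemma le_infDist' {s : Set E3} (hs : s.Nonempty) {x : E3} {c : ℝ}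
    (h : ∀ y ∈ s, c ≤ dist x y) : c ≤ Metric.infDist x s := by
  by_contra hlt
  push_neg at hlt
  obtain ⟨y, hy, hxy⟩ := (Metric.infDist_lt_iff hs).1 hlt
  exact absurd hxy (not_lt.2 (h y hy))

/-- The direction of the plane through `c₁` containing the direction of `m` and
the point `x`. -/
def Wp (m : AffineSubspace ℝ E3) (c₁ x : E3) : Submodule ℝ E3 :=
  m.direction ⊔ Submodule.span ℝ {x -ᵥ c₁}

/-- The plane through `m` and `x` (when `c₁ ∈ m`). -/
def Pl (m : AffineSubspace ℝ E3) (c₁ x : E3) : AffineSubspace ℝ E3 :=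
  AffineSubspace.mk' c₁ (Wp m c₁ x)

/-- Reflection in the plane `Pl m c₁ x`. -/
def sig (m : AffineSubspace ℝ E3) (c₁ x : E3) : E3 ≃ᵃⁱ[ℝ] E3 :=
  refl3 c₁ (Wp m c₁ x)

/-- The image of `ℓ` under that reflection. -/
def Lx (m ℓ : AffineSubspace ℝ E3) (c₁ x : E3) : AffineSubspace ℝ E3 :=
  ℓ.map (sig m c₁ x).toAffineMap

lemma mem_Pl_iff (m : AffineSubspace ℝ E3) (c₁ x p : E3) :
    p ∈ Pl m c₁ x ↔ p -ᵥ c₁ ∈ Wp m c₁ x :=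
  AffineSubspace.mem_mk'

lemma m_le_Pl {m : AffineSubspace ℝ E3} {c₁ : E3} (hc₁ : c₁ ∈ m) (x : E3) :
    m ≤ Pl m c₁ x := by
  intro p hp
  exact (mem_Pl_iff m c₁ x p).2
    (Submodule.mem_sup_left (AffineSubspace.vsub_mem_direction hp hc₁))

lemma x_mem_Pl (m : AffineSubspace ℝ E3) (c₁ x : E3) : x ∈ Pl m c₁ x := by
  rw [mem_Pl_iff]
  exact Submodule.mem_sup_right (Submodule.mem_span_singleton_self _)

lemma sig_fix {m : AffineSubspace ℝ E3} {c₁ x p : E3} (hp : p ∈ Pl m c₁ x) :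
    sig m c₁ x p = p := (refl3_fix_iff _ _ _).2 hp

lemma Lx_coe (m ℓ : AffineSubspace ℝ E3) (c₁ x : E3) :
    ((Lx m ℓ c₁ x : Set E3)) = (sig m c₁ x) '' (ℓ : Set E3) := by
  simp [Lx]

lemma Lx_line {m ℓ : AffineSubspace ℝ E3} (hℓ : IsLine ℓ) (c₁ x : E3) :
    IsLine (Lx m ℓ c₁ x) := by
  show Module.finrank ℝ (Lx m ℓ c₁ x).direction = 1
  rw [Lx, AffineSubspace.map_direction, ← hℓ]
  exact ((sig m c₁ x).toAffineEquiv.linear.finrank_map_eq ℓ.direction)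

lemma Lx_tangent {m ℓ : AffineSubspace ℝ E3} {c₁ c : E3} (hc₁ : c₁ ∈ m) (hc : c ∈ m)
    (x : E3) {r : ℝ} (hT : Tangent c r ℓ) : Tangent c r (Lx m ℓ c₁ x) := by
  show Metric.infDist c (Lx m ℓ c₁ x : Set E3) = r
  rw [Lx_coe]
  rw [show (sig m c₁ x : E3 → E3) = (refl3 c₁ (Wp m c₁ x) : E3 → E3) from rfl]
  rw [refl3_infDist c₁ (Wp m c₁ x) (m_le_Pl hc₁ x hc)]
  exact hT

theorem collinear_centres_tangent_line
    (c₁ c₂ c₃ : E3) (r₁ r₂ r₃ : ℝ)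
    (hr₁ : 0 < r₁) (hr₂ : 0 < r₂) (hr₃ : 0 < r₃)
    (m : AffineSubspace ℝ E3) (hm : IsLine m)
    (hc₁ : c₁ ∈ m) (hc₂ : c₂ ∈ m) (hc₃ : c₃ ∈ m)
    (ℓ : AffineSubspace ℝ E3) (hℓ : IsLine ℓ)
    (hT₁ : Tangent c₁ r₁ ℓ) (hT₂ : Tangent c₂ r₂ ℓ) (hT₃ : Tangent c₃ r₃ ℓ)
    (hskew₁ : ((ℓ : Set E3) ∩ (m : Set E3)) = ∅)
    (hskew₂ : ℓ.direction ≠ m.direction) :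
    {L : AffineSubspace ℝ E3 | IsLine L ∧ Meets L ℓ ∧
        Tangent c₁ r₁ L ∧ Tangent c₂ r₂ L ∧ Tangent c₃ r₃ L}.Infinite := by
  classical
  obtain ⟨b, hb⟩ := line_nonempty hℓ
  obtain ⟨v, hv0, hvdir⟩ := line_exists_dir hℓ
  have hmne : (m : Set E3).Nonempty := ⟨c₁, hc₁⟩
  have hdisj : ∀ z, z ∈ ℓ → z ∉ m := by
    intro z hz hzm
    have : z ∈ ((ℓ : Set E3) ∩ (m : Set E3)) := ⟨hz, hzm⟩
    rw [hskew₁] at this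
    exact this
  have hvnm : v ∉ m.direction := by
    intro hvm
    apply hskew₂
    have hle : ℓ.direction ≤ m.direction := by
      rw [hvdir, Submodule.span_singleton_le_iff_mem]; exact hvm
    exact Submodule.eq_of_le_of_finrank_eq hle (hℓ.trans hm.symm)
  have hLmeets : ∀ x ∈ ℓ, Meets (Lx m ℓ c₁ x) ℓ := by
    intro x hx
    refine ⟨x, ?_, hx⟩
    rw [Lx_coe]
    exact ⟨x, hx, sig_fix (x_mem_Pl m c₁ x)⟩
  -- rank of the plane direction
  have hWrank : ∀ x ∈ ℓ, Module.finrank ℝ (Wp m c₁ x) = 2 := by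
    intro x hx
    have hxm : x ∉ m := hdisj x hx
    have hxc : x -ᵥ c₁ ≠ 0 := by
      intro h0
      exact hxm (by rwa [vsub_eq_zero_iff_eq.1 h0])
    have hinf : m.direction ⊓ Submodule.span ℝ {x -ᵥ c₁} = ⊥ := by
      rw [Submodule.eq_bot_iff]
      rintro w ⟨hw1, hw2⟩
      obtain ⟨t, rfl⟩ := Submodule.mem_span_singleton.1 hw2
      rcases eq_or_ne t 0 with rfl | ht
      · simp
      · exfalso
        apply hxm
        have hmem : x -ᵥ c₁ ∈ m.direction := by
          have := m.direction.smul_mem t⁻¹ hw1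
          rwa [inv_smul_smul₀ ht] at this
        exact (AffineSubspace.vsub_right_mem_direction_iff_mem hc₁ x).1 hmem
    have hsum := Submodule.finrank_sup_add_finrank_inf_eq m.direction
      (Submodule.span ℝ {x -ᵥ c₁})
    rw [hinf, finrank_bot, hm, finrank_span_singleton hxc] at hsum
    show Module.finrank ℝ (m.direction ⊔ Submodule.span ℝ {x -ᵥ c₁} : Submodule ℝ E3) = 2
    omega
  -- ℓ is not contained in the plane through m and x
  have hnotle : ∀ x ∈ ℓ, ¬ ℓ ≤ Pl m c₁ x := by
    intro x hx hle
    have hsub : ℓ.direction ⊔ m.direction ≤ (Pl m c₁ x).direction :=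
      sup_le (AffineSubspace.direction_le hle) (AffineSubspace.direction_le (m_le_Pl hc₁ x))
    have hinf2 : ℓ.direction ⊓ m.direction = ⊥ := by
      rw [Submodule.eq_bot_iff]
      intro w hw
      have hw1 : w ∈ Submodule.span ℝ {v} := by
        rw [← hvdir]; exact (Submodule.mem_inf.1 hw).1
      have hw2 : w ∈ m.direction := (Submodule.mem_inf.1 hw).2
      obtain ⟨t, rfl⟩ := Submodule.mem_span_singleton.1 hw1
      rcases eq_or_ne t 0 with rfl | ht
      · simp
      · exfalso
        apply hvnm
        have := m.direction.smul_mem t⁻¹ hw2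
        rwa [inv_smul_smul₀ ht] at this
    have hr2 : Module.finrank ℝ (ℓ.direction ⊔ m.direction : Submodule ℝ E3) = 2 := by
      have hsum := Submodule.finrank_sup_add_finrank_inf_eq ℓ.direction m.direction
      rw [hinf2, finrank_bot, hℓ, hm] at hsum
      omega
    have heq : ℓ.direction ⊔ m.direction = (Pl m c₁ x).direction := by
      apply Submodule.eq_of_le_of_finrank_eq hsub
      rw [hr2, Pl, AffineSubspace.direction_mk', hWrank x hx]
    have hbc : b -ᵥ c₁ ∈ ℓ.direction ⊔ m.direction := by
      rw [heq]
      exact AffineSubspace.vsub_mem_direction (hle hb) (m_le_Pl hc₁ x hc₁)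
    obtain ⟨u, hu, w, hw, huw⟩ := Submodule.mem_sup.1 hbc
    have hzℓ : (-u) +ᵥ b ∈ ℓ := AffineSubspace.vadd_mem_of_mem_direction
      (ℓ.direction.neg_mem hu) hb
    have hzm : (-u) +ᵥ b ∈ m := by
      have hw' : (-u) +ᵥ b = w +ᵥ c₁ := by
        have hww : w = -u + (b -ᵥ c₁) := by rw [← huw]; abel
        rw [hww, add_vadd, vsub_vadd]
      rw [hw']
      exact AffineSubspace.vadd_mem_of_mem_direction hw hc₁
    exact hdisj _ hzℓ hzm
  -- if the reflected line is ℓ itself, the reflection acts on ℓ as point reflection in x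
  have href : ∀ x ∈ ℓ, Lx m ℓ c₁ x = ℓ →
      ∀ t : ℝ, sig m c₁ x (t • v +ᵥ x) = (-t) • v +ᵥ x := by
    intro x hx hLx t
    have hfixx : sig m c₁ x x = x := sig_fix (x_mem_Pl m c₁ x)
    set e := (sig m c₁ x).linearIsometryEquiv with he
    have hmapdir : (ℓ.direction).map ((sig m c₁ x).toAffineMap.linear) = ℓ.direction := by
      have h := congrArg AffineSubspace.direction hLx
      rwa [Lx, AffineSubspace.map_direction] at h
    have hlinv : (sig m c₁ x).toAffineMap.linear v = e v := rfl
    have hv' : v ∈ ℓ.direction := by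
      rw [hvdir]; exact Submodule.mem_span_singleton_self v
    have hvmem : e v ∈ ℓ.direction := by
      rw [← hmapdir, ← hlinv]
      exact Submodule.mem_map_of_mem hv'
    rw [hvdir, Submodule.mem_span_singleton] at hvmem
    obtain ⟨c, hc⟩ := hvmem
    have hnorm : |c| * ‖v‖ = ‖v‖ := by
      rw [← Real.norm_eq_abs, ← norm_smul, hc]
      exact e.norm_map v
    have hvn : (0:ℝ) < ‖v‖ := norm_pos_iff.2 hv0
    have habs : |c| = 1 := by
      have hz : (|c| - 1) * ‖v‖ = 0 := by linarith
      rcases mul_eq_zero.1 hz with h' | h'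
      · linarith
      · exact absurd h' (ne_of_gt hvn)
    have hmapv : ∀ s : ℝ, sig m c₁ x (s • v +ᵥ x) = (s * c) • v +ᵥ x := by
      intro s
      rw [(sig m c₁ x).map_vadd x (s • v), hfixx, ← he,
        show e (s • v) = (s * c) • v from by rw [e.map_smul, ← hc, smul_smul, mul_comm]]
    rcases (abs_eq (by norm_num : (0:ℝ) ≤ 1)).1 habs with hc1 | hc1
    · -- c = 1 : the reflection fixes ℓ pointwise, so ℓ ⊆ Pl, contradiction
      exfalso
      apply hnotle x hx
      intro z hz
      obtain ⟨s, rfl⟩ := (mem_line_iff hvdir hx z).1 hz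
      have hfz := hmapv s
      rw [hc1, mul_one] at hfz
      exact (refl3_fix_iff c₁ (Wp m c₁ x) _).1 hfz
    · rw [hmapv t, hc1, show t * (-1) = -t from by ring]
  -- reflections preserve distance to m
  have hdistm : ∀ x : E3, ∀ z : E3,
      Metric.infDist (sig m c₁ x z) (m : Set E3) = Metric.infDist z (m : Set E3) := by
    intro x z
    have himg : (sig m c₁ x) '' (m : Set E3) = (m : Set E3) := by
      ext p
      constructor
      · rintro ⟨q, hq, rfl⟩
        rw [sig_fix (m_le_Pl hc₁ x hq)]
        exact hq
      · intro hp
        exact ⟨p, hp, sig_fix (m_le_Pl hc₁ x hp)⟩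
    calc Metric.infDist (sig m c₁ x z) (m : Set E3)
        = Metric.infDist (sig m c₁ x z) ((sig m c₁ x) '' (m : Set E3)) := by rw [himg]
      _ = Metric.infDist z (m : Set E3) := Metric.infDist_image (sig m c₁ x).isometry
  -- at most one x ∈ ℓ has Lx = ℓ
  have hkey : ∀ x ∈ ℓ, ∀ y ∈ ℓ, Lx m ℓ c₁ x = ℓ → Lx m ℓ c₁ y = ℓ → x = y := by
    intro x hx y hy hLx hLy
    by_contra hxy
    obtain ⟨s, hs⟩ := (mem_line_iff hvdir hx y).1 hy
    have hs0 : s ≠ 0 := by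
      rintro rfl
      simp at hs
      exact hxy hs.symm
    set f : ℝ → ℝ := fun t => Metric.infDist (t • v +ᵥ x) (m : Set E3) with hf
    have h1 : ∀ t, f (-t) = f t := by
      intro t
      have := hdistm x (t • v +ᵥ x)
      rw [href x hx hLx t] at this
      exact this
    have h2 : ∀ t, f (2 * s - t) = f t := by
      intro t
      have harg : t • v +ᵥ x = (t - s) • v +ᵥ y := by
        rw [hs, vadd_vadd, ← add_smul, show t - s + s = t from by ring]
      have harg2 : (-(t - s)) • v +ᵥ y = (2 * s - t) • v +ᵥ x := by
        rw [hs, vadd_vadd, ← add_smul, show -(t - s) + s = 2 * s - t from by ring]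
      have h := hdistm y ((t - s) • v +ᵥ y)
      rw [href y hy hLy (t - s), harg2] at h
      show Metric.infDist ((2 * s - t) • v +ᵥ x) (m : Set E3)
          = Metric.infDist (t • v +ᵥ x) (m : Set E3)
      rw [h, ← harg]
    have h3 : ∀ t, f (t + 2 * s) = f t := by
      intro t
      have := h2 (-t)
      rw [h1 t] at this
      rw [← this]
      congr 1
      ring
    have h4 : ∀ n : ℕ, f (2 * s * n) = f 0 := by
      intro n
      induction n with
      | zero => norm_num
      | succ k ih =>
        have hcast : ((k + 1 : ℕ) : ℝ) = (k : ℝ) + 1 := by push_cast; ring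
        rw [hcast, show 2 * s * ((k:ℝ) + 1) = 2 * s * k + 2 * s from by ring, h3, ih]
    -- lower bound for distance to m
    set Q := Submodule.orthogonalProjectionOnto (m.direction)ᗮ with hQ
    have hQnorm : ∀ w : E3, ‖(Q w : E3)‖ ≤ ‖w‖ := by
      intro w
      calc ‖(Q w : E3)‖ ≤ ‖Q‖ * ‖w‖ := Q.le_opNorm w
        _ ≤ 1 * ‖w‖ := by
            apply mul_le_mul_of_nonneg_right (Submodule.orthogonalProjectionOnto_norm_le _) (norm_nonneg w)
        _ = ‖w‖ := one_mul _
    have hQzero : ∀ w ∈ m.direction, Q w = 0 := by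
      intro w hw
      exact Submodule.orthogonalProjectionOnto_apply_of_mem_orthogonal
        (Submodule.le_orthogonal_orthogonal _ hw)
    have hlow : ∀ z : E3, ‖(Q (z -ᵥ c₁) : E3)‖ ≤ Metric.infDist z (m : Set E3) := by
      intro z
      apply le_infDist' hmne
      intro p hp
      have hdec : z -ᵥ c₁ = (z -ᵥ p) + (p -ᵥ c₁) := (vsub_add_vsub_cancel z p c₁).symm
      have : Q (z -ᵥ c₁) = Q (z -ᵥ p) := by
        rw [hdec, map_add, hQzero _ (AffineSubspace.vsub_mem_direction hp hc₁), add_zero]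
      rw [this, dist_eq_norm_vsub E3]
      exact hQnorm _
    have hQv : (Q v : E3) ≠ 0 := by
      intro h0
      apply hvnm
      have : Q v = 0 := by
        ext1
        rw [h0]
        rfl
      rw [hQ, Submodule.orthogonalProjectionOnto_eq_zero_iff] at this
      rwa [Submodule.orthogonal_orthogonal] at this
    -- conclude
    set C := ‖(Q (x -ᵥ c₁) : E3)‖ with hC
    have hlow2 : ∀ n : ℕ, 2 * n * |s| * ‖(Q v : E3)‖ - C ≤ f 0 := by
      intro n
      have h5 : f (2 * s * n) = f 0 := h4 n
      have harg : ((2 * s * n) • v +ᵥ x) -ᵥ c₁ = (2 * s * n) • v + (x -ᵥ c₁) :=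
        vadd_vsub_assoc _ _ _
      have hlb := hlow ((2 * s * n) • v +ᵥ x)
      rw [harg] at hlb
      have hQlin : (Q ((2 * s * n) • v + (x -ᵥ c₁)) : E3)
          = (2 * s * n) • (Q v : E3) + (Q (x -ᵥ c₁) : E3) := by
        rw [map_add, map_smul]
        rfl
      rw [hQlin] at hlb
      have htri : ‖(2 * s * n) • (Q v : E3)‖ - ‖(Q (x -ᵥ c₁) : E3)‖
          ≤ ‖(2 * s * n) • (Q v : E3) + (Q (x -ᵥ c₁) : E3)‖ := by
        have := norm_add_le ((2 * s * n) • (Q v : E3) + (Q (x -ᵥ c₁) : E3))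
          (-(Q (x -ᵥ c₁) : E3))
        simp only [add_neg_cancel_right, norm_neg] at this
        linarith
      have hns : ‖(2 * s * n) • (Q v : E3)‖ = 2 * n * |s| * ‖(Q v : E3)‖ := by
        rw [norm_smul, Real.norm_eq_abs, abs_mul, abs_mul, abs_two, Nat.abs_cast]
        ring
      rw [hns] at htri
      have := le_trans htri hlb
      rw [← hC] at this
      rw [← h5]
      exact this
    obtain ⟨n, hn⟩ := exists_nat_gt ((f 0 + C) / (2 * |s| * ‖(Q v : E3)‖))
    have hden : 0 < 2 * |s| * ‖(Q v : E3)‖ := by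
      have := abs_pos.2 hs0
      have := norm_pos_iff.2 hQv
      positivity
    have : f 0 + C < 2 * n * |s| * ‖(Q v : E3)‖ := by
      rw [div_lt_iff₀ hden] at hn
      calc f 0 + C < n * (2 * |s| * ‖(Q v : E3)‖) := hn
        _ = 2 * n * |s| * ‖(Q v : E3)‖ := by ring
    linarith [hlow2 n]
  -- the injective family
  have hinj : ∀ x ∈ ℓ, ∀ y ∈ ℓ, Lx m ℓ c₁ x ≠ ℓ → Lx m ℓ c₁ x = Lx m ℓ c₁ y → x = y := by
    intro x hx y hy hne hLL
    by_contra hxy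
    have hxL : x ∈ Lx m ℓ c₁ x := by
      rw [← SetLike.mem_coe, Lx_coe]
      exact ⟨x, hx, sig_fix (x_mem_Pl m c₁ x)⟩
    have hyL : y ∈ Lx m ℓ c₁ x := by
      rw [hLL, ← SetLike.mem_coe, Lx_coe]
      exact ⟨y, hy, sig_fix (x_mem_Pl m c₁ y)⟩
    -- two distinct common points force Lx = ℓ
    have hvyx : y -ᵥ x ≠ 0 := fun h0 => hxy (vsub_eq_zero_iff_eq.1 h0).symm
    have hdirL : (Lx m ℓ c₁ x).direction = Submodule.span ℝ {y -ᵥ x} := by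
      have hle : Submodule.span ℝ {y -ᵥ x} ≤ (Lx m ℓ c₁ x).direction := by
        rw [Submodule.span_singleton_le_iff_mem]
        exact AffineSubspace.vsub_mem_direction hyL hxL
      exact (Submodule.eq_of_le_of_finrank_eq hle
        (by rw [finrank_span_singleton hvyx, Lx_line hℓ c₁ x])).symm
    have hdirℓ : ℓ.direction = Submodule.span ℝ {y -ᵥ x} := by
      have hle : Submodule.span ℝ {y -ᵥ x} ≤ ℓ.direction := by
        rw [Submodule.span_singleton_le_iff_mem]
        exact AffineSubspace.vsub_mem_direction hy hx
      exact (Submodule.eq_of_le_of_finrank_eq hle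
        (by rw [finrank_span_singleton hvyx, hℓ])).symm
    exact hne (AffineSubspace.ext_of_direction_eq (hdirL.trans hdirℓ.symm) ⟨x, hxL, hx⟩)
  -- the carrier of ℓ is infinite
  have hℓinf : (ℓ : Set E3).Infinite := by
    refine Set.infinite_of_injective_forall_mem
      (f := fun t : ℝ => t • v +ᵥ b) ?_ ?_
    · intro t t' ht
      simp only [vadd_right_cancel_iff] at ht
      exact smul_left_injective ℝ hv0 ht
    · intro t
      exact (mem_line_iff hvdir hb _).2 ⟨t, rfl⟩
  -- the good set
  set X : Set E3 := {x | x ∈ ℓ ∧ Lx m ℓ c₁ x ≠ ℓ} with hX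
  have hXinf : X.Infinite := by
    have hY : {x | x ∈ ℓ ∧ Lx m ℓ c₁ x = ℓ}.Subsingleton := by
      rintro x ⟨hx1, hx2⟩ y ⟨hy1, hy2⟩
      exact hkey x hx1 y hy1 hx2 hy2
    have hsplit : (ℓ : Set E3) ⊆ X ∪ {x | x ∈ ℓ ∧ Lx m ℓ c₁ x = ℓ} := by
      intro z hz
      by_cases h : Lx m ℓ c₁ z = ℓ
      · exact Or.inr ⟨hz, h⟩
      · exact Or.inl ⟨hz, h⟩
    by_contra hfin
    rw [Set.not_infinite] at hfin
    exact hℓinf (Set.Finite.subset (hfin.union hY.finite) hsplit)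
  have hinjOn : Set.InjOn (fun x => Lx m ℓ c₁ x) X := by
    rintro x ⟨hx1, hx2⟩ y ⟨hy1, _⟩ h
    exact hinj x hx1 y hy1 hx2 h
  have hsub : (fun x => Lx m ℓ c₁ x) '' X ⊆
      {L : AffineSubspace ℝ E3 | IsLine L ∧ Meets L ℓ ∧
        Tangent c₁ r₁ L ∧ Tangent c₂ r₂ L ∧ Tangent c₃ r₃ L} := by
    rintro _ ⟨x, ⟨hx1, _⟩, rfl⟩
    exact ⟨Lx_line hℓ c₁ x, hLmeets x hx1, Lx_tangent hc₁ hc₁ x hT₁,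
      Lx_tangent hc₁ hc₂ x hT₂, Lx_tangent hc₁ hc₃ x hT₃⟩
  exact Set.Infinite.mono hsub ((Set.infinite_image_iff hinjOn).2 hXinf)
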